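/- Let A ∈ ℝ^{n×n} be the adjacency matrix of a finite simple graph, D = diag(A𝟙), μ ∈ [0,1], q_k the backtrack-downweighted walk count matrices (q_0 = I, q_1 = A, q_2 = A² − μD, q_{k+1} = A·q_k + μ(μI − D)·q_{k−1}), and Z = [[O, I],[μ(μI − D), A]] ∈ ℝ^{2n×2n}. Let (c_k)_{k≥0} be reals such that the series Σ_{k=0}^∞ c_{k+2} Z^k converges in ℝ^{2n×2n}. Then the series φ = Σ_{k=0}^∞ c_k q_k converges in ℝ^{n×n} and satisfies the two closed-form identities φ = [O I]·(Σ_{k=0}^∞ c_{k+2} Z^k)·[q_1; q_2] + c_1 A + c_0 I and φ = [I O]·(Σ_{k=0}^∞ c_{k+1} Z^k)·[q_1; q_2] + c_0 I. -/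

import Mathlib

open Matrix

/-- Sandwiching by fixed matrices, as a continuous linear map. -/
noncomputable def btdwSandwich {n : ℕ} (U : Matrix (Fin n) (Fin n ⊕ Fin n) ℝ)
    (R : Matrix (Fin n ⊕ Fin n) (Fin n) ℝ) :
    Matrix (Fin n ⊕ Fin n) (Fin n ⊕ Fin n) ℝ →L[ℝ] Matrix (Fin n) (Fin n) ℝ :=
  LinearMap.toContinuousLinearMap
    { toFun := fun M => U * M * R
      map_add' := by intro x y; simp [Matrix.mul_add, Matrix.add_mul]
      map_smul' := by intro r x; simp [Matrix.mul_smul, Matrix.smul_mul] }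

/-- Right multiplication as a continuous linear map. -/
noncomputable def btdwMulRight {n : ℕ} (Z : Matrix (Fin n ⊕ Fin n) (Fin n ⊕ Fin n) ℝ) :
    Matrix (Fin n ⊕ Fin n) (Fin n ⊕ Fin n) ℝ →L[ℝ] Matrix (Fin n ⊕ Fin n) (Fin n ⊕ Fin n) ℝ :=
  LinearMap.toContinuousLinearMap
    { toFun := fun M => M * Z
      map_add' := by intro x y; simp [Matrix.add_mul]
      map_smul' := by intro r x; simp [Matrix.smul_mul] }

theorem btdw_series_closed_form
    {n : ℕ} (G : SimpleGraph (Fin n)) [DecidableRel G.Adj]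
    (A D : Matrix (Fin n) (Fin n) ℝ)
    (hA : A = G.adjMatrix ℝ)
    (hD : D = Matrix.diagonal (A *ᵥ fun _ => (1 : ℝ)))
    (μ : ℝ) (hμ : μ ∈ Set.Icc (0 : ℝ) 1)
    (q : ℕ → Matrix (Fin n) (Fin n) ℝ)
    (hq0 : q 0 = 1) (hq1 : q 1 = A) (hq2 : q 2 = A ^ 2 - μ • D)
    (hqrec : ∀ k, 2 ≤ k →
      q (k + 1) = A * q k + (μ • (μ • (1 : Matrix (Fin n) (Fin n) ℝ) - D)) * q (k - 1))
    (Z : Matrix (Fin n ⊕ Fin n) (Fin n ⊕ Fin n) ℝ)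
    (hZ : Z = Matrix.fromBlocks 0 1 (μ • (μ • (1 : Matrix (Fin n) (Fin n) ℝ) - D)) A)
    (c : ℕ → ℝ)
    (F2 : Matrix (Fin n ⊕ Fin n) (Fin n ⊕ Fin n) ℝ)
    (hF2 : HasSum (fun k => c (k + 2) • Z ^ k) F2) :
    Summable (fun k => c k • q k) ∧
    Summable (fun k => c (k + 1) • Z ^ k) ∧
    (∑' k, c k • q k) =
      Matrix.fromCols (0 : Matrix (Fin n) (Fin n) ℝ) (1 : Matrix (Fin n) (Fin n) ℝ) * F2 * Matrix.fromRows (q 1) (q 2)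
        + c 1 • A + c 0 • (1 : Matrix (Fin n) (Fin n) ℝ) ∧
    (∑' k, c k • q k) =
      Matrix.fromCols (1 : Matrix (Fin n) (Fin n) ℝ) (0 : Matrix (Fin n) (Fin n) ℝ) * (∑' k, c (k + 1) • Z ^ k) * Matrix.fromRows (q 1) (q 2)
        + c 0 • (1 : Matrix (Fin n) (Fin n) ℝ) := by
  set R : Matrix (Fin n ⊕ Fin n) (Fin n) ℝ := Matrix.fromRows (q 1) (q 2) with hR
  -- key recurrence identity
  have key : ∀ k, Z ^ k * R = Matrix.fromRows (q (k + 1)) (q (k + 2)) := by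
    intro k
    induction k with
    | zero => simp [hR]
    | succ k ih =>
      have : Z ^ (k + 1) * R = Z * (Z ^ k * R) := by
        rw [pow_succ']; rw [Matrix.mul_assoc]
      have h3 : q (k + 1 + 2) = A * q (k + 2) +
          (μ • (μ • (1 : Matrix (Fin n) (Fin n) ℝ) - D)) * q (k + 1) :=
        hqrec (k + 2) (by omega)
      rw [this, ih, hZ, Matrix.fromBlocks_mul_fromRows, h3, Matrix.smul_mul]
      simp only [Matrix.zero_mul, Matrix.one_mul, zero_add]
      rw [add_comm (μ • ((μ • (1 : Matrix (Fin n) (Fin n) ℝ) - D) * q (k + 1)))]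
  -- the two sandwich maps
  set U0 : Matrix (Fin n) (Fin n ⊕ Fin n) ℝ := Matrix.fromCols 0 1 with hU0
  set U1 : Matrix (Fin n) (Fin n ⊕ Fin n) ℝ := Matrix.fromCols 1 0 with hU1
  have ext2 : ∀ k, btdwSandwich U0 R (c (k + 2) • Z ^ k) = c (k + 2) • q (k + 2) := by
    intro k
    simp only [btdwSandwich, LinearMap.coe_toContinuousLinearMap', LinearMap.coe_mk,
      AddHom.coe_mk]
    rw [Matrix.mul_smul, Matrix.smul_mul, Matrix.mul_assoc, key, hU0,
      Matrix.fromCols_mul_fromRows]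
    simp
  have ext1 : ∀ k, btdwSandwich U1 R (c (k + 1) • Z ^ k) = c (k + 1) • q (k + 1) := by
    intro k
    simp only [btdwSandwich, LinearMap.coe_toContinuousLinearMap', LinearMap.coe_mk,
      AddHom.coe_mk]
    rw [Matrix.mul_smul, Matrix.smul_mul, Matrix.mul_assoc, key, hU1,
      Matrix.fromCols_mul_fromRows]
    simp
  -- summability of the shifted Z-series
  have hsum1 : Summable (fun k => c (k + 1) • Z ^ k) := by
    rw [← summable_nat_add_iff 1]
    have : (fun k => c (k + 1 + 1) • Z ^ (k + 1)) =
        fun k => btdwMulRight Z (c (k + 2) • Z ^ k) := by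
      funext k
      simp only [btdwMulRight, LinearMap.coe_toContinuousLinearMap', LinearMap.coe_mk,
        AddHom.coe_mk]
      rw [Matrix.smul_mul, pow_succ]
    rw [this]
    exact (hF2.summable).map _ (btdwMulRight Z).continuous
  -- HasSum for shifted q-series
  have hq2sum : HasSum (fun k => c (k + 2) • q (k + 2)) (U0 * F2 * R) := by
    have h := hF2.mapL (btdwSandwich U0 R)
    have he : (fun k => btdwSandwich U0 R (c (k + 2) • Z ^ k)) =
        fun k => c (k + 2) • q (k + 2) := funext ext2
    have hv : btdwSandwich U0 R F2 = U0 * F2 * R := rfl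
    rw [he, hv] at h
    exact h
  have hsumq : Summable (fun k => c k • q k) := by
    rw [← summable_nat_add_iff 2]
    exact hq2sum.summable
  refine ⟨hsumq, hsum1, ?_, ?_⟩
  · have h := hsumq.sum_add_tsum_nat_add 2
    have : (∑ i ∈ Finset.range 2, c i • q i) + ∑' k, c (k + 2) • q (k + 2) =
        ∑' k, c k • q k := h
    rw [← this, hq2sum.tsum_eq]
    simp [Finset.sum_range_succ, hq0, hq1]
    abel
  · have hq1sum : HasSum (fun k => c (k + 1) • q (k + 1))
        (U1 * (∑' k, c (k + 1) • Z ^ k) * R) := by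
      have h := hsum1.hasSum.mapL (btdwSandwich U1 R)
      have he : (fun k => btdwSandwich U1 R (c (k + 1) • Z ^ k)) =
          fun k => c (k + 1) • q (k + 1) := funext ext1
      have hv : btdwSandwich U1 R (∑' k, c (k + 1) • Z ^ k) =
          U1 * (∑' k, c (k + 1) • Z ^ k) * R := rfl
      rw [he, hv] at h
      exact h
    have h := hsumq.sum_add_tsum_nat_add 1
    have heq : (∑ i ∈ Finset.range 1, c i • q i) + ∑' k, c (k + 1) • q (k + 1) =
        ∑' k, c k • q k := h
    rw [← heq, hq1sum.tsum_eq]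
    simp [hq0]
    abel
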